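/- For any integer t ≥ 1, if a finite simple graph G satisfies Tr(G) ≥ t, then G contains some t-atom as a subgraph. -/

import Mathlib

/-- `A` dominates `B` in `G`: every vertex of `B` has a neighbour in `A`. -/
def SimpleGraph.Dominates {V : Type*} (G : SimpleGraph V) (A B : Finset V) : Prop :=
  ∀ b ∈ B, ∃ a ∈ A, G.Adj a b

/-- `P : Fin k → Finset V` is a transitive `k`-partition of `G`. -/
def SimpleGraph.IsTransitivePartition {V : Type*} (G : SimpleGraph V)
    {k : ℕ} (P : Fin k → Finset V) : Prop :=
  (∀ i, (P i).Nonempty) ∧ (∀ v : V, ∃! i, v ∈ P i) ∧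
  (∀ i j : Fin k, i < j → G.Dominates (P i) (P j))

/-- The transitivity `Tr(G)`: the largest `k` admitting a transitive `k`-partition. -/
noncomputable def SimpleGraph.transitivity {V : Type*} [Fintype V] (G : SimpleGraph V) : ℕ :=
  sSup {k : ℕ | ∃ P : Fin k → Finset V, G.IsTransitivePartition P}

/-- `H` is (isomorphic to) a subgraph of `G`. -/
def ContainsSubgraph {α β : Type*} (H : SimpleGraph α) (G : SimpleGraph β) : Prop :=
  ∃ f : α → β, Function.Injective f ∧ ∀ a b, H.Adj a b → G.Adj (f a) (f b)

/-- `H` is (isomorphic to) an induced subgraph of `G`. -/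
def ContainsInduced {α β : Type*} (H : SimpleGraph α) (G : SimpleGraph β) : Prop :=
  Nonempty (H ↪g G)

/-- The complete bipartite graph `K_{t,t}`. -/
def Ktt (t : ℕ) : SimpleGraph (Fin t ⊕ Fin t) := completeBipartiteGraph (Fin t) (Fin t)

/-- `K_{t,t}` minus one edge. -/
def KttMinusE (t : ℕ) : SimpleGraph (Fin t ⊕ Fin t) :=
  (Ktt t).deleteEdges {e | ∃ h : 0 < t, e = s(Sum.inl ⟨0, h⟩, Sum.inr ⟨0, h⟩)}

/-- A graph on `Fin m ⊕ Fin n` is a bipartite chain graph (w.r.t. the canonical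
orderings of the two sides): edges only go between the two sides, and
neighbourhoods are nested along each ordering. -/
def IsBipartiteChain {m n : ℕ} (G : SimpleGraph (Fin m ⊕ Fin n)) : Prop :=
  (∀ i j : Fin m, ¬ G.Adj (Sum.inl i) (Sum.inl j)) ∧
  (∀ i j : Fin n, ¬ G.Adj (Sum.inr i) (Sum.inr j)) ∧
  (∀ i j : Fin m, i ≤ j → ∀ y : Fin n, G.Adj (Sum.inl j) (Sum.inr y) → G.Adj (Sum.inl i) (Sum.inr y)) ∧
  (∀ i j : Fin n, i ≤ j → ∀ x : Fin m, G.Adj (Sum.inl x) (Sum.inr j) → G.Adj (Sum.inl x) (Sum.inr i))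


/-- One step of the `t`-atom construction: starting from the graph `H` on `α`,
add an independent set `Fin r` of new vertices, a perfect matching between the new
vertices and the `r`-element subset `W = range w` of the old vertices (via the
injection `w`), and join every old vertex outside `W` to exactly one new vertex,
namely the one given by `assign`. -/
def atomStep {α : Type} (H : SimpleGraph α) {r : ℕ} (w : Fin r → α) (assign : α → Fin r) :
    SimpleGraph (α ⊕ Fin r) where
  Adj u v :=
    match u, v with
    | Sum.inl a, Sum.inl b => H.Adj a b
    | Sum.inl a, Sum.inr i => w i = a ∨ (a ∉ Set.range w ∧ assign a = i)
    | Sum.inr i, Sum.inl a => w i = a ∨ (a ∉ Set.range w ∧ assign a = i)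
    | Sum.inr _, Sum.inr _ => False
  symm := by
    constructor
    rintro (a | i) (b | j) h
    · exact h.symm
    · exact h
    · exact h
    · exact h.elim
  loopless := by
    constructor
    rintro (a | i) h
    · exact H.irrefl h
    · exact h

/-- `IsTAtom t H`: the graph `H` is a `t`-atom.  The only `1`-atom is `K₁`, the only
`2`-atom is `K₂`, and for `t ≥ 3` a `t`-atom is obtained from a `(t-1)`-atom `H` on a
vertex set of size `n` by choosing `r ∈ {1,...,n}`, an `r`-subset `W` (the range of the
injection `w`), and performing the construction `atomStep`. -/
inductive IsTAtom : ℕ → ∀ {α : Type}, SimpleGraph α → Prop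
  | one : IsTAtom 1 (⊥ : SimpleGraph (Fin 1))
  | two : IsTAtom 2 (⊤ : SimpleGraph (Fin 2))
  | step {t : ℕ} {α : Type} [Fintype α] {H : SimpleGraph α} {r : ℕ}
      (ht : 2 ≤ t) (hH : IsTAtom t H) (hr : 1 ≤ r) (hrcard : r ≤ Fintype.card α)
      (w : Fin r → α) (hw : Function.Injective w) (assign : α → Fin r) :
      IsTAtom (t + 1) (atomStep H w assign)

lemma atom_finite {t : ℕ} {α : Type} {H : SimpleGraph α} (h : IsTAtom t H) : Finite α := by
  induction h with
  | one => infer_instance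
  | two => infer_instance
  | step ht hH hr hrc w hw assign ih => infer_instance

lemma atom_nonempty {t : ℕ} {α : Type} {H : SimpleGraph α} (h : IsTAtom t H) : Nonempty α := by
  induction h with
  | one => exact ⟨0⟩
  | two => exact ⟨0⟩
  | @step t α _ H r ht hH hr hrc w hw assign ih => exact ⟨Sum.inr ⟨0, hr⟩⟩

lemma merge_partition {V : Type} [Fintype V] (G : SimpleGraph V) {k t : ℕ} (ht : 1 ≤ t)
    (hk : t ≤ k) (P : Fin k → Finset V) (hP : G.IsTransitivePartition P) :
    ∃ Q : Fin t → Finset V, G.IsTransitivePartition Q := by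
  classical
  obtain ⟨hne, huniq, hdom⟩ := hP
  set d := k - t with hd
  have hdk : d + t = k := Nat.sub_add_cancel hk
  set Q : Fin t → Finset V := fun i => if i.val = 0 then
      Finset.univ.filter (fun v => ∃ j : Fin k, j.val ≤ d ∧ v ∈ P j)
    else P ⟨d + i.val, by have := i.isLt; omega⟩ with hQ
  have hQ0 : ∀ (i : Fin t) (v : V), i.val = 0 →
      (v ∈ Q i ↔ ∃ j : Fin k, j.val ≤ d ∧ v ∈ P j) := by
    intro i v h0
    rw [hQ]; simp only [if_pos h0, Finset.mem_filter, Finset.mem_univ, true_and]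
  have hQ1 : ∀ (i : Fin t) (v : V) (h0 : i.val ≠ 0),
      (v ∈ Q i ↔ v ∈ P ⟨d + i.val, by have := i.isLt; omega⟩) := by
    intro i v h0
    rw [hQ]; simp only [if_neg h0]
  refine ⟨Q, ?_, ?_, ?_⟩
  · intro i
    by_cases h0 : i.val = 0
    · obtain ⟨v, hv⟩ := hne ⟨0, by omega⟩
      exact ⟨v, (hQ0 i v h0).mpr ⟨⟨0, by omega⟩, by simp, hv⟩⟩
    · obtain ⟨v, hv⟩ := hne ⟨d + i.val, by have := i.isLt; omega⟩
      exact ⟨v, (hQ1 i v h0).mpr hv⟩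
  · intro v
    obtain ⟨j0, hj0, hj0u⟩ := huniq v
    by_cases hle : j0.val ≤ d
    · refine ⟨⟨0, ht⟩, (hQ0 _ v rfl).mpr ⟨j0, hle, hj0⟩, ?_⟩
      intro i hi
      by_cases h0 : i.val = 0
      · exact Fin.ext h0
      · exfalso
        have hi' := (hQ1 i v h0).mp hi
        have := congrArg Fin.val (hj0u _ hi')
        simp at this
        omega
    · refine ⟨⟨j0.val - d, by have := j0.isLt; omega⟩, ?_, ?_⟩
      · have h0 : j0.val - d ≠ 0 := by omega
        refine (hQ1 _ v h0).mpr ?_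
        have heq : (⟨d + (j0.val - d), by have := j0.isLt; omega⟩ : Fin k) = j0 :=
          Fin.ext (by simp; omega)
        rw [heq]; exact hj0
      · intro i hi
        by_cases h0 : i.val = 0
        · exfalso
          obtain ⟨j, hjle, hj⟩ := (hQ0 i v h0).mp hi
          have := congrArg Fin.val (hj0u _ hj)
          omega
        · have hi' := (hQ1 i v h0).mp hi
          have := congrArg Fin.val (hj0u _ hi')
          simp at this
          apply Fin.ext
          simp
          omega
  · intro i j hij b hb
    have hijv : i.val < j.val := hij
    have hj0 : j.val ≠ 0 := by omega
    have hb' := (hQ1 j b hj0).mp hb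
    by_cases h0 : i.val = 0
    · obtain ⟨a, ha, hadj⟩ := hdom ⟨d, by omega⟩ ⟨d + j.val, by have := j.isLt; omega⟩
        (Fin.mk_lt_mk.mpr (by omega)) b hb'
      exact ⟨a, (hQ0 i a h0).mpr ⟨⟨d, by omega⟩, le_refl d, ha⟩, hadj⟩
    · obtain ⟨a, ha, hadj⟩ := hdom ⟨d + i.val, by have := i.isLt; omega⟩
        ⟨d + j.val, by have := j.isLt; omega⟩
        (Fin.mk_lt_mk.mpr (by omega)) b hb'
      exact ⟨a, (hQ1 i a h0).mpr ha, hadj⟩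
lemma atom_key : ∀ (t : ℕ), 1 ≤ t → ∀ (V : Type) [Fintype V] (G : SimpleGraph V)
    (P : Fin t → Finset V), G.IsTransitivePartition P →
    ∃ (α : Type) (H : SimpleGraph α), IsTAtom t H ∧ ContainsSubgraph H G := by
  intro t
  induction t using Nat.strong_induction_on with
  | _ t IH =>
    intro ht V _ G P hP
    obtain ⟨hne, huniq, hdom⟩ := hP
    match t, ht with
    | 1, _ =>
      obtain ⟨v, hv⟩ := hne 0
      refine ⟨Fin 1, ⊥, IsTAtom.one, fun _ => v, fun a b _ => Subsingleton.elim a b, ?_⟩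
      intro a b hab
      exact absurd hab (by simp)
    | 2, _ =>
      obtain ⟨b, hb⟩ := hne 1
      obtain ⟨a, ha, hadj⟩ := hdom 0 1 (by decide) b hb
      refine ⟨Fin 2, ⊤, IsTAtom.two, ![a, b], ?_, ?_⟩
      · intro i j hij
        fin_cases i <;> fin_cases j <;> simp_all
      · intro i j hij
        fin_cases i <;> fin_cases j <;> simp_all
        exact hadj.symm
    | (n+3), _ =>
      classical
      -- the set of vertices outside P 0
      set S : Set V := {v | v ∉ P 0} with hS
      -- induced subgraph
      set G' : SimpleGraph S := G.comap (Subtype.val : S → V) with hG'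
      -- the partition of G' into the remaining classes
      have hnotzero : ∀ (j : Fin (n+3)) (v : V), j ≠ 0 → v ∈ P j → v ∈ S := by
        intro j v hj hv hv0
        obtain ⟨j0, _, hj0u⟩ := huniq v
        exact hj ((hj0u _ hv).trans (hj0u _ hv0).symm)
      set Q : Fin (n+2) → Finset S := fun i =>
        (P i.succ).subtype (· ∈ S) with hQdef
      have hQmem : ∀ (i : Fin (n+2)) (v : S), v ∈ Q i ↔ (v : V) ∈ P i.succ := by
        intro i v
        rw [hQdef]
        simp [Finset.mem_subtype]
      have hQpart : G'.IsTransitivePartition Q := by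
        refine ⟨?_, ?_, ?_⟩
        · intro i
          obtain ⟨v, hv⟩ := hne i.succ
          exact ⟨⟨v, hnotzero _ _ (Fin.succ_ne_zero i) hv⟩, (hQmem i _).mpr hv⟩
        · intro v
          obtain ⟨j0, hj0, hj0u⟩ := huniq (v : V)
          have hj0ne : j0 ≠ 0 := by
            intro h
            exact v.2 (h ▸ hj0)
          refine ⟨j0.pred hj0ne, (hQmem _ v).mpr (by rwa [Fin.succ_pred]), ?_⟩
          intro i hi
          have := hj0u _ ((hQmem i v).mp hi)
          apply Fin.succ_injective
          rw [this, Fin.succ_pred]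
        · intro i j hij b hb
          obtain ⟨a, ha, hadj⟩ := hdom i.succ j.succ (Fin.succ_lt_succ_iff.mpr hij)
            (b : V) ((hQmem j b).mp hb)
          refine ⟨⟨a, hnotzero _ _ (Fin.succ_ne_zero i) ha⟩, (hQmem i _).mpr ha, ?_⟩
          exact hadj
      -- apply the induction hypothesis
      obtain ⟨α, H, hAtom, f, hfinj, hfadj⟩ :=
        IH (n+2) (by omega) (by omega) S G' Q hQpart
      have hfin : Finite α := atom_finite hAtom
      letI : Fintype α := Fintype.ofFinite α
      have hαne : Nonempty α := atom_nonempty hAtom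
      -- choose neighbours in P 0
      have hnb : ∀ a : α, ∃ v : V, v ∈ P 0 ∧ G.Adj v ((f a : S) : V) := by
        intro a
        obtain ⟨j0, hj0, _⟩ := huniq ((f a : S) : V)
        have hj0ne : j0 ≠ 0 := by
          intro h
          exact (f a).2 (h ▸ hj0)
        exact hdom 0 j0 (Fin.pos_of_ne_zero hj0ne) _ hj0
      choose g hg1 hg2 using hnb
      set T : Finset V := Finset.image g Finset.univ with hT
      have hTP0 : ∀ v ∈ T, v ∈ P 0 := by
        intro v hv
        obtain ⟨c, _, rfl⟩ := Finset.mem_image.mp hv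
        exact hg1 c
      set r : ℕ := T.card with hr
      have hr1 : 1 ≤ r := by
        rw [hr]
        refine Finset.card_pos.mpr ?_
        exact (Finset.univ_nonempty).image g
      have hr2 : r ≤ Fintype.card α := by
        rw [hr, hT]
        calc T.card ≤ Finset.univ.card := Finset.card_image_le
          _ = Fintype.card α := Finset.card_univ
      set e : Fin r ≃ T := T.equivFin.symm with he
      have hWex : ∀ i : Fin r, ∃ a : α, g a = ((e i : T) : V) := by
        intro i
        obtain ⟨a, _, ha⟩ := Finset.mem_image.mp (e i).2
        exact ⟨a, ha⟩
      choose w hwg using hWex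
      have hwinj : Function.Injective w := by
        intro i j h
        apply e.injective
        apply Subtype.ext
        rw [← hwg i, ← hwg j, h]
      set assign : α → Fin r :=
        fun a => T.equivFin ⟨g a, Finset.mem_image_of_mem g (Finset.mem_univ a)⟩
        with hassign
      have hassign_val : ∀ a : α, ((e (assign a) : T) : V) = g a := by
        intro a
        rw [he, hassign, Equiv.symm_apply_apply]
      -- the subgraph embedding
      set F : α ⊕ Fin r → V :=
        Sum.elim (fun a => ((f a : S) : V)) (fun i => ((e i : T) : V)) with hF
      have hFinj : Function.Injective F := by
        rintro (a | i) (b | j) h <;> simp only [hF, Sum.elim_inl, Sum.elim_inr] at h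
        · exact congrArg Sum.inl (hfinj (Subtype.ext h))
        · exact absurd (hTP0 _ (h ▸ (e j).2)) (f a).2
        · exact absurd (hTP0 _ (h ▸ (e i).2)) (f b).2
        · exact congrArg Sum.inr (e.injective (Subtype.ext h))
      have hFadj : ∀ u v, (atomStep H w assign).Adj u v → G.Adj (F u) (F v) := by
        have hmatched : ∀ (a : α) (i : Fin r),
            w i = a ∨ (a ∉ Set.range w ∧ assign a = i) →
            G.Adj ((f a : S) : V) ((e i : T) : V) := by
          rintro a i (hcase | ⟨-, hcase⟩)
          · have : ((e i : T) : V) = g a := by rw [← hcase, hwg]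
            rw [this]
            exact (hg2 a).symm
          · have : ((e i : T) : V) = g a := by rw [← hcase, hassign_val]
            rw [this]
            exact (hg2 a).symm
        rintro (a | i) (b | j) h
        · exact hfadj a b h
        · exact hmatched a j h
        · exact (hmatched b i h).symm
        · exact h.elim
      exact ⟨α ⊕ Fin r, atomStep H w assign,
        IsTAtom.step (by omega) hAtom hr1 hr2 w hwinj assign, F, hFinj, hFadj⟩
/-- For any integer `t ≥ 1`, if a finite simple graph `G` satisfies `Tr(G) ≥ t`,
then `G` contains some `t`-atom as a subgraph. -/
theorem contains_atom_of_transitivity_ge {V : Type} [Fintype V] (G : SimpleGraph V)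
    (t : ℕ) (ht : 1 ≤ t) (htr : t ≤ G.transitivity) :
    ∃ (α : Type) (H : SimpleGraph α), IsTAtom t H ∧ ContainsSubgraph H G := by
  classical
  rw [SimpleGraph.transitivity] at htr
  set Sset : Set ℕ := {k : ℕ | ∃ P : Fin k → Finset V, G.IsTransitivePartition P} with hSset
  have hbdd : BddAbove Sset := by
    refine ⟨Fintype.card V, fun k hk => ?_⟩
    obtain ⟨P, hne, huniq, _⟩ := hk
    have hinj : Function.Injective (fun i : Fin k => (hne i).choose) := by
      intro i j h
      simp only at h
      obtain ⟨j0, _, hu⟩ := huniq (hne i).choose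
      have hi := (hne i).choose_spec
      have hj := (hne j).choose_spec
      rw [hu i hi, hu j (h ▸ hj)]
    calc k = Fintype.card (Fin k) := (Fintype.card_fin k).symm
      _ ≤ Fintype.card V := Fintype.card_le_of_injective _ hinj
  have hsne : Sset.Nonempty := by
    by_contra h
    rw [Set.not_nonempty_iff_eq_empty] at h
    rw [h, csSup_empty, Nat.bot_eq_zero] at htr
    omega
  obtain ⟨P, hP⟩ := Nat.sSup_mem hsne hbdd
  obtain ⟨Q, hQ⟩ := merge_partition G ht htr P hP
  exact atom_key t ht V G Q hQ
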